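/- Let s ∈ ℚ^{k+1} be a vector with all entries strictly positive and summing to 1, and let B ∈ ℚ^{k×k}. Let Q be the (k+1)×k matrix whose top k×k block is the identity and whose last row is −1^⊤, and let Q' be the unique k×(k+1) rational matrix satisfying Q'Q = I and Q's = 0 (such a Q' exists and is unique). Suppose every entry of the matrix Q B Q' is strictly less than min_i s_i in absolute value. Then the matrix M = s · 1^⊤ + Q B Q' is column-stochastic with all entries strictly positive, and for every v ∈ ℚ^k there exist a rational η > 0 and a vector μ ∈ ℚ^{k+1} with nonnegative entries summing to 1 such that M^n μ = s + η Q B^n v for all n ≥ 0. -/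
import Mathlib


/-- The `(k+1) × k` rational matrix whose top `k × k` block is the identity and whose
last row is `-1ᵀ`. -/
def Qmat (k : ℕ) : Matrix (Fin (k + 1)) (Fin k) ℚ :=
  Matrix.of fun i j => if (i : ℕ) = (j : ℕ) then 1 else if (i : ℕ) = k then -1 else 0

lemma Qmat_colsum (k : ℕ) (j : Fin k) : ∑ i, Qmat k i j = 0 := by
  rw [Fin.sum_univ_castSucc]
  have h1 : ∀ m : Fin k, Qmat k (Fin.castSucc m) j = if m = j then 1 else 0 := by
    intro m
    simp only [Qmat, Matrix.of_apply, Fin.coe_castSucc]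
    rcases eq_or_ne m j with h | h
    · simp [h]
    · have : (m : ℕ) ≠ (j : ℕ) := fun hc => h (Fin.ext hc)
      simp [this, h, Nat.ne_of_lt m.isLt]
  have h2 : Qmat k (Fin.last k) j = -1 := by
    have : (k : ℕ) ≠ (j : ℕ) := (Nat.ne_of_lt j.isLt).symm
    simp [Qmat, this]
  simp [h1, h2, Finset.sum_ite_eq']

lemma Qmat_mulVec_sum (k : ℕ) (w : Fin k → ℚ) : ∑ i, (Qmat k).mulVec w i = 0 := by
  simp only [Matrix.mulVec, dotProduct]
  rw [Finset.sum_comm]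
  simp [← Finset.sum_mul, Qmat_colsum]

/-- Let `s ∈ ℚ^(k+1)` have strictly positive entries summing to `1`, let `B ∈ ℚ^(k×k)`,
let `Q` be the matrix with identity top block and last row `-1ᵀ`, and let `Q'` be the
(unique) `k × (k+1)` rational matrix with `Q' Q = I` and `Q' s = 0`. If every entry of
`Q B Q'` is `< min_i s_i` in absolute value, then `M = s · 1ᵀ + Q B Q'` is
column-stochastic with strictly positive entries, and for every `v ∈ ℚ^k` there are a
rational `η > 0` and a distribution `μ ∈ ℚ^(k+1)` with `M^n μ = s + η Q B^n v` for
all `n`. -/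
theorem stmt14 {k : ℕ} (s : Fin (k + 1) → ℚ)
    (hspos : ∀ i, 0 < s i) (hssum : ∑ i, s i = 1)
    (B : Matrix (Fin k) (Fin k) ℚ)
    (Q' : Matrix (Fin k) (Fin (k + 1)) ℚ)
    (hQ'Q : Q' * Qmat k = 1) (hQ's : Q'.mulVec s = 0)
    (hsmall : ∀ i j i', |(Qmat k * B * Q') i j| < s i') :
    (∀ i j, 0 < s i + (Qmat k * B * Q') i j) ∧
    (∀ j, ∑ i, (s i + (Qmat k * B * Q') i j) = 1) ∧
    ∀ v : Fin k → ℚ, ∃ (η : ℚ) (μ : Fin (k + 1) → ℚ),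
      0 < η ∧ (∀ i, 0 ≤ μ i) ∧ (∑ i, μ i = 1) ∧
      ∀ n : ℕ,
        ((Matrix.of fun i j => s i + (Qmat k * B * Q') i j) ^ n).mulVec μ =
          s + η • (Qmat k).mulVec ((B ^ n).mulVec v) := by
  set A : Matrix (Fin (k+1)) (Fin (k+1)) ℚ := Qmat k * B * Q' with hA
  set M : Matrix (Fin (k+1)) (Fin (k+1)) ℚ :=
    Matrix.of fun i j => s i + A i j with hM
  -- column sums of A are zero
  have hAcol : ∀ j, ∑ i, A i j = 0 := by
    intro j
    have : ∀ i, A i j = ∑ l, Qmat k i l * (B * Q') l j := by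
      intro i; rw [hA, Matrix.mul_assoc, Matrix.mul_apply]
    simp only [this]
    rw [Finset.sum_comm]
    simp [← Finset.sum_mul, Qmat_colsum]
  -- A s = 0
  have hAs : A.mulVec s = 0 := by
    rw [hA, ← Matrix.mulVec_mulVec, hQ's]
    simp [Matrix.mulVec_zero]
  -- A (Q w) = Q (B w)
  have hAQ : ∀ w : Fin k → ℚ, A.mulVec ((Qmat k).mulVec w) = (Qmat k).mulVec (B.mulVec w) := by
    intro w
    rw [Matrix.mulVec_mulVec]
    have : A * Qmat k = Qmat k * B := by
      rw [hA, Matrix.mul_assoc, hQ'Q, Matrix.mul_one]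
    rw [this, ← Matrix.mulVec_mulVec]
  -- mulVec formula for M
  have hMvec : ∀ x : Fin (k+1) → ℚ,
      M.mulVec x = (∑ j, x j) • s + A.mulVec x := by
    intro x
    funext i
    simp only [hM, Matrix.mulVec, dotProduct, Matrix.of_apply, Pi.add_apply,
      Pi.smul_apply, smul_eq_mul, add_mul]
    rw [Finset.sum_add_distrib]
    congr 1
    rw [Finset.sum_mul]
    exact Finset.sum_congr rfl fun j _ => mul_comm _ _
  have hpos : ∀ i j, 0 < s i + A i j := by
    intro i j
    have := hsmall i j i
    have := neg_abs_le (A i j)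
    linarith
  refine ⟨hpos, ?_, ?_⟩
  · intro j
    rw [Finset.sum_add_distrib, hssum, hAcol j, add_zero]
  · intro v
    set w : Fin (k+1) → ℚ := (Qmat k).mulVec v with hw
    set c : ℚ := ∑ i, |w i| with hc
    have hc0 : 0 ≤ c := Finset.sum_nonneg fun i _ => abs_nonneg _
    -- min of s
    obtain ⟨i₀, -, hi₀⟩ := Finset.exists_min_image Finset.univ s ⟨0, Finset.mem_univ 0⟩
    set η : ℚ := s i₀ / (c + 1) with hη
    have hηpos : 0 < η := div_pos (hspos i₀) (by linarith)
    have habs : ∀ i, η * |w i| < s i := by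
      intro i
      have h1 : |w i| ≤ c := Finset.single_le_sum (f := fun i => |w i|)
        (fun i _ => abs_nonneg _) (Finset.mem_univ i)
      have h2 : η * |w i| ≤ η * c := by
        apply mul_le_mul_of_nonneg_left h1 (le_of_lt hηpos)
      have h3 : η * c < s i₀ := by
        rw [hη, div_mul_eq_mul_div, div_lt_iff₀ (by linarith : (0:ℚ) < c + 1)]
        nlinarith [hspos i₀]
      exact lt_of_le_of_lt h2 (lt_of_lt_of_le h3 (hi₀ i (Finset.mem_univ i)))
    refine ⟨η, s + η • w, hηpos, ?_, ?_, ?_⟩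
    · intro i
      have := habs i
      have := neg_abs_le (w i)
      have : -(η * |w i|) ≤ η * w i := by nlinarith [abs_nonneg (w i)]
      simp only [Pi.add_apply, Pi.smul_apply, smul_eq_mul]
      linarith [habs i]
    · simp only [Pi.add_apply, Pi.smul_apply, smul_eq_mul]
      rw [Finset.sum_add_distrib, hssum, ← Finset.mul_sum, hw, Qmat_mulVec_sum]
      ring
    · intro n
      induction n with
      | zero =>
        simp [Matrix.one_mulVec, hw]
      | succ n ih =>
        have hstep : (M ^ (n+1)).mulVec (s + η • w)
            = M.mulVec ((M ^ n).mulVec (s + η • w)) := by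
          rw [pow_succ', ← Matrix.mulVec_mulVec]
        rw [hstep, ih, hMvec]
        have hsum0 : ∑ j, (s + η • (Qmat k).mulVec ((B ^ n).mulVec v)) j = 1 := by
          simp only [Pi.add_apply, Pi.smul_apply, smul_eq_mul]
          rw [Finset.sum_add_distrib, hssum, ← Finset.mul_sum, Qmat_mulVec_sum]
          ring
        rw [hsum0, Matrix.mulVec_add, hAs, Matrix.mulVec_smul, hAQ]
        simp only [one_smul, add_zero, zero_add]
        congr 2
        rw [pow_succ', Matrix.mulVec_mulVec, Matrix.mulVec_mulVec, Matrix.mul_assoc, ← Matrix.mulVec_mulVec]
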